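/- Let 0 < r₁ < r₂ be real numbers, let 0 < Δ < 1/r₁, and set Δ̂ = Δ·r₁/(r₂ − r₁). Define the probability densities f₁(r) = 1/r₁ for r ∈ [0, r₁] and 0 otherwise, and f₂(r) = 1/r₁ − Δ for r ∈ [0, r₁], f₂(r) = Δ̂ for r ∈ (r₁, r₂], and 0 otherwise. Then for every integer N ≥ 1, ∫₀^{r₁} r^N f₁(r) dr < ∫₀^{r₂} r^N f₂(r) dr. -/

import Mathlib

/-- **Lemma 2.** For `0 < r₁ < r₂`, `0 < Δ < 1/r₁`, `Δ̂ = Δ·r₁/(r₂ − r₁)`,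
with densities `f₁ = 1/r₁` on `[0, r₁]` (else `0`) and `f₂ = 1/r₁ − Δ` on `[0, r₁]`,
`f₂ = Δ̂` on `(r₁, r₂]` (else `0`), for every integer `N ≥ 1` the `N`-th moment of `f₁`
is strictly smaller than that of `f₂`:
`∫₀^{r₁} r^N f₁(r) dr < ∫₀^{r₂} r^N f₂(r) dr`. -/
theorem moment_comparison_lemma2
    (r₁ r₂ Δ : ℝ) (hr₁ : 0 < r₁) (hr₁₂ : r₁ < r₂) (hΔ : 0 < Δ) (hΔ' : Δ < 1 / r₁)
    (N : ℕ) (hN : 1 ≤ N) :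
    (∫ r in (0:ℝ)..r₁, r ^ N * (if 0 ≤ r ∧ r ≤ r₁ then 1 / r₁ else 0)) <
      ∫ r in (0:ℝ)..r₂, r ^ N *
        (if 0 ≤ r ∧ r ≤ r₁ then 1 / r₁ - Δ
         else if r₁ < r ∧ r ≤ r₂ then Δ * r₁ / (r₂ - r₁) else 0) := by
  have hsub : 0 < r₂ - r₁ := by linarith
  set F : ℝ → ℝ := fun r => r ^ N *
        (if 0 ≤ r ∧ r ≤ r₁ then 1 / r₁ - Δ
         else if r₁ < r ∧ r ≤ r₂ then Δ * r₁ / (r₂ - r₁) else 0) with hF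
  -- first integral
  have h1 : (∫ r in (0:ℝ)..r₁, r ^ N * (if 0 ≤ r ∧ r ≤ r₁ then 1 / r₁ else 0))
      = r₁ ^ (N + 1) / (N + 1) * (1 / r₁) := by
    rw [intervalIntegral.integral_congr (g := fun r => r ^ N * (1 / r₁))]
    · rw [intervalIntegral.integral_mul_const, integral_pow]
      simp
    · intro r hr
      rw [Set.uIcc_of_le hr₁.le] at hr
      simp [hr.1, hr.2]
  -- the two pieces of F
  have hA : (∫ r in (0:ℝ)..r₁, F r) = r₁ ^ (N + 1) / (N + 1) * (1 / r₁ - Δ) := by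
    rw [intervalIntegral.integral_congr (g := fun r => r ^ N * (1 / r₁ - Δ))]
    · rw [intervalIntegral.integral_mul_const, integral_pow]
      simp
    · intro r hr
      rw [Set.uIcc_of_le hr₁.le] at hr
      simp [hF, hr.1, hr.2]
  have hB : (∫ r in r₁..r₂, F r)
      = (r₂ ^ (N + 1) - r₁ ^ (N + 1)) / (N + 1) * (Δ * r₁ / (r₂ - r₁)) := by
    rw [intervalIntegral.integral_congr_ae (g := fun r => r ^ N * (Δ * r₁ / (r₂ - r₁)))]
    · rw [intervalIntegral.integral_mul_const, integral_pow]
    · filter_upwards with r hr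
      rw [Set.uIoc_of_le hr₁₂.le] at hr
      have h1 : ¬ (0 ≤ r ∧ r ≤ r₁) := fun h => absurd h.2 (not_le.mpr hr.1)
      simp [hF, h1, hr.1, hr.2]
  -- integrability
  have hiA : IntervalIntegrable F MeasureTheory.volume 0 r₁ := by
    apply ((Continuous.intervalIntegrable (by continuity : Continuous fun r : ℝ => r ^ N * (1 / r₁ - Δ)) 0 r₁)).congr_ae
    rw [Filter.EventuallyEq, MeasureTheory.ae_restrict_iff' measurableSet_uIoc]
    filter_upwards with r hr
    rw [Set.uIoc_of_le hr₁.le] at hr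
    simp [hF, hr.1.le, hr.2]
  have hiB : IntervalIntegrable F MeasureTheory.volume r₁ r₂ := by
    apply ((Continuous.intervalIntegrable (by continuity : Continuous fun r : ℝ => r ^ N * (Δ * r₁ / (r₂ - r₁))) r₁ r₂)).congr_ae
    rw [Filter.EventuallyEq, MeasureTheory.ae_restrict_iff' measurableSet_uIoc]
    filter_upwards with r hr
    rw [Set.uIoc_of_le hr₁₂.le] at hr
    have h1 : ¬ (0 ≤ r ∧ r ≤ r₁) := fun h => absurd h.2 (not_le.mpr hr.1)
    simp [hF, h1, hr.1, hr.2]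
  have hsplit : (∫ r in (0:ℝ)..r₂, F r) = (∫ r in (0:ℝ)..r₁, F r) + ∫ r in r₁..r₂, F r :=
    (intervalIntegral.integral_add_adjacent_intervals hiA hiB).symm
  rw [h1, hsplit, hA, hB]
  have hN1 : (0:ℝ) < (N:ℝ) + 1 := by positivity
  have hpow : r₁ ^ N < r₂ ^ N :=
    pow_lt_pow_left₀ hr₁₂ hr₁.le (by omega)
  have hkey : r₁ ^ N * (r₂ - r₁) < r₂ ^ (N + 1) - r₁ ^ (N + 1) := by
    have h2 : r₂ ^ (N + 1) = r₂ * r₂ ^ N := by ring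
    have h3 : r₁ ^ (N + 1) = r₁ * r₁ ^ N := by ring
    nlinarith
  rw [← sub_pos]
  have hrw : r₁ ^ (N + 1) / (↑N + 1) * (1 / r₁ - Δ)
        + (r₂ ^ (N + 1) - r₁ ^ (N + 1)) / (↑N + 1) * (Δ * r₁ / (r₂ - r₁))
        - r₁ ^ (N + 1) / (↑N + 1) * (1 / r₁)
      = Δ * r₁ / ((↑N + 1) * (r₂ - r₁))
        * ((r₂ ^ (N + 1) - r₁ ^ (N + 1)) - r₁ ^ N * (r₂ - r₁)) := by
    field_simp
    ring
  rw [hrw]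
  apply mul_pos (by positivity)
  linarith [hkey]
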